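/- Let E be a directed graph, V ⊆ E⁰, H the saturated closure of V, and I the Γ-order-ideal of the talented monoid M_E^Γ generated by {[v] : v ∈ V}. Then H = {v ∈ E⁰ : [v] ∈ I} and {v ∈ B_H : [v^H] ∈ I} = ∅; that is, I = J^Γ(H, ∅). -/

import Mathlib

/-- A directed graph: vertices, edges, source and range maps. -/
structure DGraph where
  V : Type
  Ed : Type
  s : Ed → V
  r : Ed → V

namespace DGraph

variable (E : DGraph)

/-- One-step adjacency: there is an edge from `u` to `v`. -/
def Adj (u v : E.V) : Prop := ∃ e, E.s e = u ∧ E.r e = v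

/-- `u ≥ v`: there is a (finite) path from `u` to `v`. -/
def Reaches (u v : E.V) : Prop := Relation.ReflTransGen E.Adj u v

/-- The tree `T(W)` of a set of vertices. -/
def tree (W : Set E.V) : Set E.V := {u | ∃ v ∈ W, E.Reaches v u}

/-- The root `R(W)` of a set of vertices. -/
def root (W : Set E.V) : Set E.V := {u | ∃ v ∈ W, E.Reaches u v}

/-- The set of edges emitted by `v`. -/
def emits (v : E.V) : Set E.Ed := {e | E.s e = v}

/-- A sink emits no edges. -/
def IsSink (v : E.V) : Prop := E.emits v = ∅

/-- An infinite emitter emits infinitely many edges. -/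
def IsInfEmitter (v : E.V) : Prop := (E.emits v).Infinite

/-- A regular vertex is neither a sink nor an infinite emitter. -/
def IsRegular (v : E.V) : Prop := (E.emits v).Nonempty ∧ (E.emits v).Finite

/-- A hereditary set of vertices: `T(H) ⊆ H`. -/
def Hereditary (H : Set E.V) : Prop := ∀ u ∈ H, ∀ v, E.Reaches u v → v ∈ H

/-- A saturated set of vertices. -/
def Saturated (H : Set E.V) : Prop :=
  ∀ v, E.IsRegular v → (∀ e ∈ E.emits v, E.r e ∈ H) → v ∈ H

/-- The saturated closure of `W`: the smallest hereditary and saturated set containing `W`. -/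
def satClosure (W : Set E.V) : Set E.V :=
  ⋂₀ {H : Set E.V | E.Hereditary H ∧ E.Saturated H ∧ W ⊆ H}

/-- `es` is a finite walk (path) starting at `u`; `es = []` is the trivial path at `u`. -/
def IsWalkFrom (u : E.V) (es : List E.Ed) : Prop :=
  es.Chain' (fun e f => E.r e = E.s f) ∧ ∀ e ∈ es.head?, E.s e = u

/-- The terminal vertex (range) of the walk `es` starting at `u`. -/
def endVert (u : E.V) (es : List E.Ed) : E.V := es.getLast?.elim u E.r

/-- The set of vertices on the walk `es` starting at `u`. -/
def walkVerts (u : E.V) (es : List E.Ed) : Set E.V :=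
  insert u {v | ∃ e ∈ es, E.r e = v}

/-- An infinite path. -/
def IsInfPath (f : ℕ → E.Ed) : Prop := ∀ n, E.r (f n) = E.s (f (n + 1))

/-- The set of vertices on an infinite path. -/
def infVerts (f : ℕ → E.Ed) : Set E.V := Set.range fun n => E.s (f n)

/-- Elements of `E^{≤∞}`: finite walks or infinite paths. -/
inductive GPath (E : DGraph) : Type where
  | fin : E.V → List E.Ed → GPath E
  | inf : (ℕ → E.Ed) → GPath E

/-- Membership in `E^{≤∞}`: a well-formed finite path ending in a sink or an infinite
emitter, or an infinite path. -/
def gmem : GPath E → Prop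
  | .fin u es => E.IsWalkFrom u es ∧
      (E.IsSink (E.endVert u es) ∨ E.IsInfEmitter (E.endVert u es))
  | .inf f => E.IsInfPath f

/-- `p⁰`, the vertex set of an element of `E^{≤∞}`. -/
def gverts : GPath E → Set E.V
  | .fin u es => E.walkVerts u es
  | .inf f => E.infVerts f

/-- The graph `E` is cofinal. -/
def Cofinal : Prop :=
  ∀ v : E.V, ∀ p : GPath E, E.gmem p → ∃ w ∈ E.gverts p, E.Reaches v w

/-- `es` is a cycle based at `u`. -/
def IsCycle (u : E.V) (es : List E.Ed) : Prop :=
  es ≠ [] ∧ E.IsWalkFrom u es ∧ E.endVert u es = u ∧ (es.map E.s).Nodup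

/-- The cycle `es` (based at `u`) has an exit. -/
def HasExit (u : E.V) (es : List E.Ed) : Prop :=
  ∃ v ∈ E.walkVerts u es, ∃ e, E.s e = v ∧ e ∉ es

/-- An extreme cycle: a cycle with an exit such that `T(c⁰) ⊆ R(c⁰)`. -/
def IsExtremeCycle (u : E.V) (es : List E.Ed) : Prop :=
  E.IsCycle u es ∧ E.HasExit u es ∧
    E.tree (E.walkVerts u es) ⊆ E.root (E.walkVerts u es)

/-- `v` lies on some cycle. -/
def OnCycle (v : E.V) : Prop := ∃ u es, E.IsCycle u es ∧ v ∈ E.walkVerts u es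

/-- A terminal (infinite) path. -/
def IsTerminalPath (f : ℕ → E.Ed) : Prop :=
  E.IsInfPath f ∧
  (∀ v ∈ E.tree (E.infVerts f), ¬ E.IsInfEmitter v ∧ ¬ E.OnCycle v) ∧
  (∀ g : ℕ → E.Ed, E.IsInfPath g → E.s (g 0) ∈ E.infVerts f →
      E.tree (E.infVerts g) ⊆ E.root (E.infVerts g))

/-- A terminal vertex: a sink, a vertex on a cycle without exits, a vertex on an
extreme cycle, or a vertex on a terminal path. -/
def IsTerminalVert (v : E.V) : Prop :=
  E.IsSink v ∨
  (∃ u es, E.IsCycle u es ∧ ¬ E.HasExit u es ∧ v ∈ E.walkVerts u es) ∨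
  (∃ u es, E.IsExtremeCycle u es ∧ v ∈ E.walkVerts u es) ∨
  (∃ f, E.IsTerminalPath f ∧ v ∈ E.infVerts f)

/-- `p ∼ q` for elements of `E^{≤∞}`: `R(p⁰) = R(q⁰)`. -/
def pequiv (p q : GPath E) : Prop := E.root (E.gverts p) = E.root (E.gverts q)

/-- `v ≈ w` for terminal vertices. -/
def approx (v w : E.V) : Prop :=
  E.IsTerminalVert v ∧ E.IsTerminalVert w ∧
  ∃ p q : GPath E, E.gmem p ∧ E.gmem q ∧ v ∈ E.gverts p ∧ w ∈ E.gverts q ∧ E.pequiv p q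

/-- The cluster of a terminal vertex `v`: its `≈`-equivalence class. -/
def cluster (v : E.V) : Set E.V := {w | E.approx v w}

/-- `C` is a cluster of `E`. -/
def IsCluster (C : Set E.V) : Prop := ∃ v, E.IsTerminalVert v ∧ C = E.cluster v

/-- `Ter(E)`: the saturated closure of the set of terminal vertices. -/
def Ter : Set E.V := E.satClosure {v | E.IsTerminalVert v}

/-- The set `B_H` of breaking vertices of a (hereditary and saturated) set `H`. -/
def breaking (H : Set E.V) : Set E.V :=
  {v | v ∉ H ∧ E.IsInfEmitter v ∧
    {e | E.s e = v ∧ E.r e ∉ H}.Nonempty ∧ {e | E.s e = v ∧ E.r e ∉ H}.Finite}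

/-- `(H, S)` is an admissible pair. -/
def Admissible (H S : Set E.V) : Prop :=
  E.Hereditary H ∧ E.Saturated H ∧ S ⊆ E.breaking H

end DGraph
namespace DGraph

variable (E : DGraph)

/-- Generators `q^v_Z`: an infinite emitter `v` with a finite nonempty `Z ⊆ s⁻¹(v)`. -/
def QGen : Type :=
  {p : E.V × Set E.Ed // E.IsInfEmitter p.1 ∧ p.2 ⊆ E.emits p.1 ∧ p.2.Nonempty ∧ p.2.Finite}

/-- Generators of the talented monoid: vertices and elements `q^v_Z`. -/
def TalGen : Type := E.V ⊕ E.QGen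

/-- The free commutative `Γ`-monoid on the generators, `Γ = ⟨t⟩` infinite cyclic:
a basis element `(k, g)` stands for `tᵏ g`. -/
abbrev FreeTal : Type := (ℤ × E.TalGen) →₀ ℕ

/-- The element `Σ_{e ∈ F} t^{k+1}[r(e)]` of the free monoid. -/
noncomputable def tSum (k : ℤ) (F : Finset E.Ed) : E.FreeTal :=
  ∑ e ∈ F, Finsupp.single (k + 1, (Sum.inl (E.r e) : E.TalGen)) 1

/-- The defining relations of the talented monoid (at every degree `k`). -/
def TalRel : E.FreeTal → E.FreeTal → Prop := fun x y =>
  (∃ (k : ℤ) (v : E.V) (h : E.IsRegular v),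
      x = Finsupp.single (k, (Sum.inl v : E.TalGen)) 1 ∧ y = E.tSum k h.2.toFinset) ∨
  (∃ (k : ℤ) (g : E.QGen),
      x = Finsupp.single (k, (Sum.inl g.1.1 : E.TalGen)) 1 ∧
      y = (Finsupp.single (k, (Sum.inr g : E.TalGen)) 1 : E.FreeTal)
            + E.tSum k g.2.2.2.2.toFinset) ∨
  (∃ (k : ℤ) (g₁ g₂ : E.QGen),
      g₁.1.1 = g₂.1.1 ∧ g₁.1.2 ⊆ g₂.1.2 ∧ g₁.1.2 ≠ g₂.1.2 ∧
      x = Finsupp.single (k, (Sum.inr g₁ : E.TalGen)) 1 ∧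
      y = (Finsupp.single (k, (Sum.inr g₂ : E.TalGen)) 1 : E.FreeTal) +
            E.tSum k ((g₂.2.2.2.2.subset Set.diff_subset
              (t := g₂.1.2 \ g₁.1.2)).toFinset))

/-- The congruence generated by the defining relations. -/
noncomputable def talCon : AddCon E.FreeTal := addConGen E.TalRel

/-- The talented monoid `M_E^Γ`. -/
abbrev Tal : Type := E.talCon.Quotient

/-- The shift `tⁿ` on the free monoid. -/
noncomputable def shiftF (n : ℤ) : E.FreeTal →+ E.FreeTal :=
  Finsupp.mapDomain.addMonoidHom (fun p => (p.1 + n, p.2))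

theorem shiftF_single (n k : ℤ) (g : E.TalGen) (c : ℕ) :
    E.shiftF n (Finsupp.single (k, g) c) = Finsupp.single (k + n, g) c := by
  simp [shiftF, Finsupp.mapDomain.addMonoidHom_apply, Finsupp.mapDomain_single]

theorem shiftF_tSum (n k : ℤ) (F : Finset E.Ed) :
    E.shiftF n (E.tSum k F) = E.tSum (k + n) F := by
  unfold tSum
  rw [map_sum]
  refine Finset.sum_congr rfl fun e _ => ?_
  exact (E.shiftF_single n (k + 1) _ 1).trans (by rw [add_right_comm])

theorem shiftF_rel (n : ℤ) {x y : E.FreeTal} (h : E.TalRel x y) :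
    E.TalRel (E.shiftF n x) (E.shiftF n y) := by
  rcases h with ⟨k, v, hv, hx, hy⟩ | ⟨k, g, hx, hy⟩ | ⟨k, g₁, g₂, h1, h2, h3, hx, hy⟩
  · exact Or.inl ⟨k + n, v, hv, by rw [hx]; exact E.shiftF_single n k _ 1,
      by rw [hy]; exact E.shiftF_tSum n k _⟩
  · refine Or.inr (Or.inl ⟨k + n, g, by rw [hx]; exact E.shiftF_single n k _ 1, ?_⟩)
    rw [hy, map_add]
    exact congrArg₂ (· + ·) (E.shiftF_single n k _ 1) (E.shiftF_tSum n k _)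
  · refine Or.inr (Or.inr ⟨k + n, g₁, g₂, h1, h2, h3, by rw [hx]; exact E.shiftF_single n k _ 1, ?_⟩)
    rw [hy, map_add]
    exact congrArg₂ (· + ·) (E.shiftF_single n k _ 1) (E.shiftF_tSum n k _)

/-- The action of `tⁿ` on the talented monoid. -/
noncomputable def shiftT (n : ℤ) : E.Tal →+ E.Tal :=
  AddCon.lift E.talCon (E.talCon.mk'.comp (E.shiftF n)) (by
    refine AddCon.addConGen_le.mpr fun x y hxy => ?_
    have h := E.shiftF_rel n hxy
    show E.talCon.mk' (E.shiftF n x) = E.talCon.mk' (E.shiftF n y)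
    exact (AddCon.eq _).mpr (AddConGen.Rel.of _ _ h))

/-- The element `[v]` of the talented monoid. -/
noncomputable def tv (v : E.V) : E.Tal :=
  E.talCon.mk' (Finsupp.single ((0 : ℤ), (Sum.inl v : E.TalGen)) 1)

/-- The element `[q^v_Z]` of the talented monoid. -/
noncomputable def tq (g : E.QGen) : E.Tal :=
  E.talCon.mk' (Finsupp.single ((0 : ℤ), (Sum.inr g : E.TalGen)) 1)

/-- The algebraic (pre)order on the talented monoid. -/
def talLE (x y : E.Tal) : Prop := ∃ z, y = x + z

/-- A periodic element: nonzero with `tⁿ x = x` for some `n > 0`. -/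
def TPeriodic (x : E.Tal) : Prop := x ≠ 0 ∧ ∃ n : ℤ, 0 < n ∧ E.shiftT n x = x

/-- An aperiodic element: nonzero with `tⁿ x ≤ x`, `tⁿ x ≠ x` for some `n > 0`. -/
def TAperiodic (x : E.Tal) : Prop :=
  x ≠ 0 ∧ ∃ n : ℤ, 0 < n ∧ E.talLE (E.shiftT n x) x ∧ E.shiftT n x ≠ x

/-- An incomparable element: nonzero and incomparable with `tⁿ x` for every `n > 0`. -/
def TIncomparable (x : E.Tal) : Prop :=
  x ≠ 0 ∧ ∀ n : ℤ, 0 < n → ¬ E.talLE x (E.shiftT n x) ∧ ¬ E.talLE (E.shiftT n x) x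

/-- A comparable element: periodic or aperiodic. -/
def TComparable (x : E.Tal) : Prop := E.TPeriodic x ∨ E.TAperiodic x

/-- A `Γ`-order-ideal of the talented monoid. -/
def IsGOI (I : Set E.Tal) : Prop :=
  0 ∈ I ∧ (∀ x ∈ I, ∀ y ∈ I, x + y ∈ I) ∧
  (∀ n : ℤ, ∀ x ∈ I, E.shiftT n x ∈ I) ∧
  (∀ x y : E.Tal, x + y ∈ I → x ∈ I ∧ y ∈ I)

/-- The `Γ`-order-ideal generated by a set. -/
def genGOI (A : Set E.Tal) : Set E.Tal := ⋂₀ {I | E.IsGOI I ∧ A ⊆ I}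

/-- A minimal nonzero `Γ`-order-ideal. -/
def MinGOI (I : Set E.Tal) : Prop :=
  E.IsGOI I ∧ I ≠ {0} ∧ ∀ J, E.IsGOI J → J ⊆ I → J ≠ {0} → J = I

/-- The generator `q^v_Z` with `Z = s⁻¹(v) ∩ r⁻¹(E⁰ − H)`, for `v ∈ B_H`;
it represents `[v^H]`. -/
noncomputable def vhGen (H : Set E.V) (v : E.V) (h : v ∈ E.breaking H) : E.QGen :=
  ⟨(v, {e | E.s e = v ∧ E.r e ∉ H}), h.2.1, fun _ he => he.1, h.2.2.1, h.2.2.2⟩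

end DGraph

namespace DGraph

variable (E : DGraph)

/-- Base vertex of a generator. -/
def gbase : E.TalGen → E.V := Sum.elim id (fun g => g.1.1)

/-- All generators appearing in `x` have base vertex in `H`. -/
def suppIn (H : Set E.V) (x : E.FreeTal) : Prop :=
  ∀ p ∈ x.support, E.gbase p.2 ∈ H

theorem suppIn_zero (H : Set E.V) : E.suppIn H 0 := by
  intro p hp; simp at hp

theorem suppIn_add {H : Set E.V} {x y : E.FreeTal} :
    E.suppIn H (x + y) ↔ E.suppIn H x ∧ E.suppIn H y := by
  simp only [suppIn, Finsupp.mem_support_iff, Finsupp.add_apply]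
  constructor
  · intro h
    exact ⟨fun p hp => h p (by omega), fun p hp => h p (by omega)⟩
  · rintro ⟨hx, hy⟩ p hp
    by_cases h0 : x p = 0
    · exact hy p (by omega)
    · exact hx p h0

theorem suppIn_single {H : Set E.V} {p : ℤ × E.TalGen} :
    E.suppIn H (Finsupp.single p 1) ↔ E.gbase p.2 ∈ H := by
  simp only [suppIn, Finsupp.support_single_ne_zero p one_ne_zero, Finset.mem_singleton]
  exact ⟨fun h => h p rfl, fun h q hq => hq ▸ h⟩

theorem suppIn_sumSingle {H : Set E.V} {α : Type*} [DecidableEq α] (F : Finset α)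
    (f : α → ℤ × E.TalGen) :
    E.suppIn H (∑ a ∈ F, Finsupp.single (f a) 1) ↔ ∀ a ∈ F, E.gbase (f a).2 ∈ H := by
  induction F using Finset.induction_on with
  | empty => simpa using E.suppIn_zero H
  | @insert a s hne ih =>
      rw [Finset.sum_insert hne, E.suppIn_add, E.suppIn_single, ih,
        Finset.forall_mem_insert]

theorem suppIn_tSum {H : Set E.V} {k : ℤ} {F : Finset E.Ed} :
    E.suppIn H (E.tSum k F) ↔ ∀ e ∈ F, E.r e ∈ H := by
  classical
  unfold tSum
  rw [E.suppIn_sumSingle]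
  exact Iff.rfl

theorem hered_adj {H : Set E.V} (hH : E.Hereditary H) {v : E.V} (hv : v ∈ H)
    {e : E.Ed} (he : e ∈ E.emits v) : E.r e ∈ H :=
  hH v hv _ (Relation.ReflTransGen.single ⟨e, he, rfl⟩)

/-- The congruence "`suppIn H` on both sides is equivalent". -/
def suppCon (H : Set E.V) : AddCon E.FreeTal where
  r x y := E.suppIn H x ↔ E.suppIn H y
  iseqv := ⟨fun _ => Iff.rfl, Iff.symm, Iff.trans⟩
  add' h1 h2 := by
    show E.suppIn H _ ↔ E.suppIn H _
    rw [E.suppIn_add, E.suppIn_add]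
    exact and_congr h1 h2

theorem suppIn_iff_of_rel {H : Set E.V} (hH : E.Hereditary H) (hS : E.Saturated H)
    {x y : E.FreeTal} (h : E.TalRel x y) : E.suppIn H x ↔ E.suppIn H y := by
  rcases h with ⟨k, v, hv, hx, hy⟩ | ⟨k, g, hx, hy⟩ | ⟨k, g₁, g₂, h1, h2, h3, hx, hy⟩
  · subst hx; subst hy
    erw [E.suppIn_single, E.suppIn_tSum]
    simp only [gbase, Sum.elim_inl, id_eq]
    constructor
    · intro hvH e he
      exact E.hered_adj hH hvH (hv.2.mem_toFinset.mp he)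
    · intro hall
      exact hS v hv fun e he => hall e (hv.2.mem_toFinset.mpr he)
  · subst hx; subst hy
    erw [E.suppIn_single, E.suppIn_add, E.suppIn_single, E.suppIn_tSum]
    simp only [gbase, Sum.elim_inl, Sum.elim_inr, id_eq]
    constructor
    · intro hvH
      exact ⟨hvH, fun e he =>
        E.hered_adj hH hvH (g.2.2.1 (g.2.2.2.2.mem_toFinset.mp he))⟩
    · exact fun h => h.1
  · subst hx; subst hy
    erw [E.suppIn_single, E.suppIn_add, E.suppIn_single, E.suppIn_tSum]
    simp only [gbase, Sum.elim_inr]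
    rw [h1]
    constructor
    · intro hvH
      refine ⟨hvH, fun e he => ?_⟩
      have hmem : e ∈ g₂.1.2 \ g₁.1.2 := (Set.Finite.mem_toFinset _).mp he
      exact E.hered_adj hH hvH (g₂.2.2.1 hmem.1)
    · exact fun h => h.1

theorem suppIn_iff_of_con {H : Set E.V} (hH : E.Hereditary H) (hS : E.Saturated H)
    {x y : E.FreeTal} (h : E.talCon x y) : E.suppIn H x ↔ E.suppIn H y := by
  have hle : E.talCon ≤ E.suppCon H :=
    AddCon.addConGen_le.mpr fun a b hab => E.suppIn_iff_of_rel hH hS hab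
  exact hle h

theorem mk'_eq_iff {x y : E.FreeTal} :
    E.talCon.mk' x = E.talCon.mk' y ↔ E.talCon x y := AddCon.eq _

theorem talCon_of_rel {x y : E.FreeTal} (h : E.TalRel x y) : E.talCon x y :=
  AddConGen.Rel.of _ _ h

theorem mk'_eq_of_rel {x y : E.FreeTal} (h : E.TalRel x y) :
    E.talCon.mk' x = E.talCon.mk' y := E.mk'_eq_iff.mpr (E.talCon_of_rel h)

/-- The candidate ideal: classes all of whose representatives are supported in `H`. -/
def ISupp (H : Set E.V) : Set E.Tal :=
  {a | ∀ x : E.FreeTal, E.talCon.mk' x = a → E.suppIn H x}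

theorem mem_ISupp {H : Set E.V} (hH : E.Hereditary H) (hS : E.Saturated H)
    {x : E.FreeTal} : E.talCon.mk' x ∈ E.ISupp H ↔ E.suppIn H x := by
  constructor
  · exact fun h => h x rfl
  · intro hx y hy
    exact (E.suppIn_iff_of_con hH hS (E.mk'_eq_iff.mp hy)).mpr hx

theorem shiftT_mk' (n : ℤ) (x : E.FreeTal) :
    E.shiftT n (E.talCon.mk' x) = E.talCon.mk' (E.shiftF n x) := rfl

theorem suppIn_shiftF {H : Set E.V} {x : E.FreeTal} (n : ℤ) (h : E.suppIn H x) :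
    E.suppIn H (E.shiftF n x) := by
  classical
  intro p hp
  have hp' : p ∈ (Finsupp.mapDomain (fun q : ℤ × E.TalGen => (q.1 + n, q.2)) x).support := by
    simpa [shiftF, Finsupp.mapDomain.addMonoidHom_apply] using hp
  have hsub := Finsupp.mapDomain_support
    (f := fun q : ℤ × E.TalGen => (q.1 + n, q.2)) (s := x)
  obtain ⟨q, hq, rfl⟩ := Finset.mem_image.mp (hsub hp')
  exact h q hq

theorem isGOI_ISupp {H : Set E.V} (hH : E.Hereditary H) (hS : E.Saturated H) :
    E.IsGOI (E.ISupp H) := by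
  have hmem : ∀ x : E.FreeTal, E.talCon.mk' x ∈ E.ISupp H ↔ E.suppIn H x :=
    fun x => E.mem_ISupp hH hS
  refine ⟨?_, ?_, ?_, ?_⟩
  · have h0 : E.talCon.mk' (0 : E.FreeTal) = 0 := map_zero _
    rw [← h0, hmem]; exact E.suppIn_zero H
  · intro a ha b hb
    obtain ⟨x, rfl⟩ := AddCon.mk'_surjective a
    obtain ⟨y, rfl⟩ := AddCon.mk'_surjective b
    rw [← map_add, hmem, E.suppIn_add]
    exact ⟨(hmem x).mp ha, (hmem y).mp hb⟩
  · intro n a ha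
    obtain ⟨x, rfl⟩ := AddCon.mk'_surjective a
    rw [E.shiftT_mk', hmem]
    exact E.suppIn_shiftF n ((hmem x).mp ha)
  · intro a b hab
    obtain ⟨x, rfl⟩ := AddCon.mk'_surjective a
    obtain ⟨y, rfl⟩ := AddCon.mk'_surjective b
    rw [← map_add, hmem, E.suppIn_add] at hab
    exact ⟨(hmem x).mpr hab.1, (hmem y).mpr hab.2⟩

theorem isGOI_genGOI (A : Set E.Tal) : E.IsGOI (E.genGOI A) := by
  refine ⟨?_, ?_, ?_, ?_⟩
  · exact fun I hI => hI.1.1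
  · intro x hx y hy I hI
    exact hI.1.2.1 x (hx I hI) y (hy I hI)
  · intro n x hx I hI
    exact hI.1.2.2.1 n x (hx I hI)
  · intro x y hxy
    constructor <;> intro I hI
    · exact (hI.1.2.2.2 x y (hxy I hI)).1
    · exact (hI.1.2.2.2 x y (hxy I hI)).2

theorem subset_genGOI (A : Set E.Tal) : A ⊆ E.genGOI A :=
  fun _ hx I hI => hI.2 hx

theorem genGOI_subset {A J : Set E.Tal} (hJ : E.IsGOI J) (hAJ : A ⊆ J) :
    E.genGOI A ⊆ J :=
  fun _ hx => hx J ⟨hJ, hAJ⟩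

theorem sum_mem_GOI {I : Set E.Tal} (hI : E.IsGOI I) {α : Type*} [DecidableEq α]
    (F : Finset α) (f : α → E.Tal) (h : ∀ a ∈ F, f a ∈ I) : ∑ a ∈ F, f a ∈ I := by
  induction F using Finset.induction_on with
  | empty => simpa using hI.1
  | @insert a s hne ih =>
      rw [Finset.sum_insert hne]
      exact hI.2.1 _ (h _ (Finset.mem_insert_self _ _)) _
        (ih fun b hb => h b (Finset.mem_insert_of_mem hb))

theorem tv_adj_mem {I : Set E.Tal} (hI : E.IsGOI I) {u v : E.V} (h : E.Adj u v)
    (hu : E.tv u ∈ I) : E.tv v ∈ I := by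
  classical
  obtain ⟨e, hse, hre⟩ := h
  have hse' : e ∈ E.emits u := hse
  have key : E.talCon.mk' (Finsupp.single ((1:ℤ), (Sum.inl v : E.TalGen)) 1) ∈ I := by
    by_cases hfin : (E.emits u).Finite
    · have hreg : E.IsRegular u := ⟨⟨e, hse'⟩, hfin⟩
      have heq : E.tv u = E.talCon.mk' (E.tSum 0 hreg.2.toFinset) :=
        E.mk'_eq_of_rel (Or.inl ⟨0, u, hreg, rfl, rfl⟩)
      have he : e ∈ hreg.2.toFinset := hreg.2.mem_toFinset.mpr hse'
      rw [heq] at hu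
      unfold tSum at hu
      rw [← Finset.add_sum_erase _ _ he, map_add] at hu
      have hsplit := (hI.2.2.2 _ _ hu).1
      rw [zero_add, hre] at hsplit
      exact hsplit
    · have hinf : E.IsInfEmitter u := hfin
      let g : E.QGen :=
        ⟨(u, {e}), hinf, Set.singleton_subset_iff.mpr hse', ⟨e, rfl⟩,
          Set.finite_singleton e⟩
      have heq : E.tv u = E.talCon.mk'
          ((Finsupp.single ((0:ℤ), (Sum.inr g : E.TalGen)) 1 : E.FreeTal)
            + E.tSum 0 g.2.2.2.2.toFinset) :=
        E.mk'_eq_of_rel (Or.inr (Or.inl ⟨0, g, rfl, rfl⟩))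
      have hF : g.2.2.2.2.toFinset = ({e} : Finset E.Ed) := by
        ext f
        rw [Set.Finite.mem_toFinset]
        show f ∈ ({e} : Set E.Ed) ↔ f ∈ ({e} : Finset E.Ed)
        simp
      rw [hF] at heq
      unfold tSum at heq
      rw [Finset.sum_singleton] at heq
      rw [heq, map_add] at hu
      have hsplit := (hI.2.2.2 _ _ hu).2
      rw [zero_add, hre] at hsplit
      exact hsplit
  have h2 := hI.2.2.1 (-1) _ key
  have h3 : E.shiftT (-1)
      (E.talCon.mk' (Finsupp.single ((1:ℤ), (Sum.inl v : E.TalGen)) 1)) = E.tv v := by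
    erw [E.shiftT_mk', E.shiftF_single]
    norm_num [tv]
  rwa [h3] at h2

theorem tv_reaches_mem {I : Set E.Tal} (hI : E.IsGOI I) {u v : E.V} (h : E.Reaches u v)
    (hu : E.tv u ∈ I) : E.tv v ∈ I := by
  induction h with
  | refl => exact hu
  | tail _ hadj ih => exact E.tv_adj_mem hI hadj ih

theorem tv_sat_mem {I : Set E.Tal} (hI : E.IsGOI I) {v : E.V} (hreg : E.IsRegular v)
    (h : ∀ e ∈ E.emits v, E.tv (E.r e) ∈ I) : E.tv v ∈ I := by
  classical
  have heq : E.tv v = E.talCon.mk' (E.tSum 0 hreg.2.toFinset) :=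
    E.mk'_eq_of_rel (Or.inl ⟨0, v, hreg, rfl, rfl⟩)
  rw [heq]
  unfold tSum
  rw [map_sum]
  refine E.sum_mem_GOI hI _ _ fun e he => ?_
  have hmem : E.tv (E.r e) ∈ I := h e (hreg.2.mem_toFinset.mp he)
  have h1 := hI.2.2.1 1 _ hmem
  have heq2 : E.shiftT 1 (E.tv (E.r e))
      = E.talCon.mk' (Finsupp.single ((0:ℤ)+1, (Sum.inl (E.r e) : E.TalGen)) 1) := by
    unfold tv
    erw [E.shiftT_mk', E.shiftF_single, zero_add]
  rwa [heq2] at h1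

theorem satClosure_hereditary (W : Set E.V) : E.Hereditary (E.satClosure W) := by
  intro u hu v hre
  simp only [satClosure, Set.mem_sInter] at hu ⊢
  intro H hH
  exact hH.1 u (hu H hH) v hre

theorem satClosure_saturated (W : Set E.V) : E.Saturated (E.satClosure W) := by
  intro v hreg hall
  simp only [satClosure, Set.mem_sInter] at hall ⊢
  intro H hH
  exact hH.2.1 v hreg fun e he => hall e he H hH

theorem subset_satClosure (W : Set E.V) : W ⊆ E.satClosure W := by
  intro v hv
  simp only [satClosure, Set.mem_sInter]
  exact fun H hH => hH.2.2 hv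

theorem satClosure_min {W H' : Set E.V} (h1 : E.Hereditary H') (h2 : E.Saturated H')
    (h3 : W ⊆ H') : E.satClosure W ⊆ H' :=
  Set.sInter_subset_of_mem ⟨h1, h2, h3⟩

end DGraph
/-- Lemma: if `H` is the saturated closure of `W` and `I` is the
`Γ`-order-ideal of `M_E^Γ` generated by `{[v] : v ∈ W}`, then
`H = {v : [v] ∈ I}`, no `[v^H]` with `v ∈ B_H` lies in `I`, and `I = J^Γ(H, ∅)`. -/
theorem genGOI_of_set (E : DGraph) (W : Set E.V) :
    E.satClosure W = {v | E.tv v ∈ E.genGOI {x | ∃ v ∈ W, x = E.tv v}} ∧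
    (∀ v : E.V, ∀ h : v ∈ E.breaking (E.satClosure W),
      E.tq (E.vhGen (E.satClosure W) v h) ∉ E.genGOI {x | ∃ v ∈ W, x = E.tv v}) ∧
    E.genGOI {x | ∃ v ∈ W, x = E.tv v}
      = E.genGOI {x | ∃ v ∈ E.satClosure W, x = E.tv v} := by
  classical
  have hH : E.Hereditary (E.satClosure W) := E.satClosure_hereditary W
  have hS : E.Saturated (E.satClosure W) := E.satClosure_saturated W
  have hWH : W ⊆ E.satClosure W := E.subset_satClosure W
  have hGOI := E.isGOI_genGOI {x | ∃ v ∈ W, x = E.tv v}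
  -- the generated ideal is contained in the support ideal
  have hIsub : E.genGOI {x | ∃ v ∈ W, x = E.tv v} ⊆ E.ISupp (E.satClosure W) := by
    refine E.genGOI_subset (E.isGOI_ISupp hH hS) ?_
    rintro x ⟨v, hv, rfl⟩
    exact (E.mem_ISupp hH hS).mpr (E.suppIn_single.mpr (hWH hv))
  -- every vertex of the saturated closure has its class in the generated ideal
  have hHsub : ∀ v ∈ E.satClosure W, E.tv v ∈ E.genGOI {x | ∃ v ∈ W, x = E.tv v} := by
    have hmin : E.satClosure W ⊆ {v | E.tv v ∈ E.genGOI {x | ∃ v ∈ W, x = E.tv v}} := by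
      refine E.satClosure_min ?_ ?_ ?_
      · intro u hu v hre
        exact E.tv_reaches_mem hGOI hre hu
      · intro v hreg hall
        exact E.tv_sat_mem hGOI hreg hall
      · intro v hv
        exact E.subset_genGOI _ ⟨v, hv, rfl⟩
    exact fun v hv => hmin hv
  have hKsub : ∀ v : E.V, E.tv v ∈ E.genGOI {x | ∃ v ∈ W, x = E.tv v} →
      v ∈ E.satClosure W := by
    intro v hv
    have h1 := hIsub hv
    have h2 : E.suppIn (E.satClosure W)
        (Finsupp.single ((0:ℤ), (Sum.inl v : E.TalGen)) 1) := h1 _ rfl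
    exact E.suppIn_single.mp h2
  refine ⟨?_, ?_, ?_⟩
  · ext v
    exact ⟨fun h => hHsub v h, fun h => hKsub v h⟩
  · intro v h hmem
    have h1 := hIsub hmem
    have h2 : E.suppIn (E.satClosure W)
        (Finsupp.single ((0:ℤ),
          (Sum.inr (E.vhGen (E.satClosure W) v h) : E.TalGen)) 1) := h1 _ rfl
    exact h.1 (E.suppIn_single.mp h2)
  · refine Set.Subset.antisymm ?_ ?_
    · refine E.genGOI_subset (E.isGOI_genGOI _) ?_
      rintro x ⟨v, hv, rfl⟩
      exact E.subset_genGOI _ ⟨v, hWH hv, rfl⟩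
    · refine E.genGOI_subset hGOI ?_
      rintro x ⟨v, hv, rfl⟩
      exact hHsub v hv
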